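/- Let A be a commutative ring, f ∈ A a nonzerodivisor, and A → B a faithfully flat ring homomorphism (so that the images of f in B and in B ⊗_A B are again nonzerodivisors). Then the sequence 0 → MO(A, f) → MO(B, f) → MO(B ⊗_A B, f) is exact, where the first map is induced by A → B, and the second map is the difference of the two maps induced by b ↦ b ⊗ 1 and b ↦ 1 ⊗ b. Concretely: the map MO(A,f) → MO(B,f) is injective, and its image is exactly the set of elements of MO(B,f) on which the two maps to MO(B ⊗_A B, f) agree. -/

import Mathlib

open TensorProduct

/-- `MO(A,f)`: the subset of the localization `L` (with localization map `ι : A →+* L`)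
consisting of those `x` with `ι f * x = ι a` for some `a` in the radical of `(f)`. -/
def MOset {A L : Type*} [CommRing A] [CommRing L] (ι : A →+* L) (f : A) : Set L :=
  {x | ∃ a ∈ (Ideal.span {f}).radical, ι a = ι f * x}


/-- A flat module over a commutative ring has no torsion by nonzerodivisors. -/
lemma flat_smul_cancel {A M : Type*} [CommRing A] [AddCommGroup M] [Module A M]
    [Module.Flat A M] {f : A} (hf : f ∈ nonZeroDivisors A) {x : M} (hx : f • x = 0) :
    x = 0 := by
  have hg : Function.Injective (LinearMap.lsmul A A f) := by
    intro a b hab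
    simp only [LinearMap.lsmul_apply, smul_eq_mul] at hab
    exact (mul_cancel_left_mem_nonZeroDivisors hf).mp hab
  have hinj := Module.Flat.lTensor_preserves_injective_linearMap
    (M := M) (LinearMap.lsmul A A f) hg
  have h0 : (LinearMap.lTensor M (LinearMap.lsmul A A f)) (x ⊗ₜ[A] (1 : A)) = 0 := by
    rw [LinearMap.lTensor_tmul]
    simp only [LinearMap.lsmul_apply, smul_eq_mul, mul_one]
    rw [show (f : A) = f • (1 : A) by simp, ← smul_tmul, hx, zero_tmul]
  have hz : x ⊗ₜ[A] (1 : A) = 0 := hinj (by simpa using h0)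
  have := congrArg (TensorProduct.rid A M) hz
  simpa using this

/-- Purity: a faithfully flat algebra is a pure extension, i.e. `m ↦ 1 ⊗ m` is injective. -/
lemma ff_pure {A B : Type*} [CommRing A] [CommRing B] [Algebra A B]
    [Module.FaithfullyFlat A B] {M : Type*} [AddCommGroup M] [Module A M]
    {m : M} (h : (1 : B) ⊗ₜ[A] m = 0) : m = 0 := by
  set N := Submodule.span A {m} with hN
  have hmN : m ∈ N := Submodule.mem_span_singleton_self m
  have hinj := Module.Flat.lTensor_preserves_injective_linearMap
    (M := B) N.subtype N.injective_subtype
  have h1 : (1 : B) ⊗ₜ[A] (⟨m, hmN⟩ : N) = 0 := by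
    apply hinj
    simpa [LinearMap.lTensor_tmul] using h
  have hss : Subsingleton (B ⊗[A] N) := by
    have hz : ∀ z : B ⊗[A] N, z = 0 := by
      intro z
      induction z using TensorProduct.induction_on with
      | zero => rfl
      | tmul b n =>
        obtain ⟨n, hn⟩ := n
        obtain ⟨a, rfl⟩ := Submodule.mem_span_singleton.mp hn
        have e1 : (⟨a • m, hn⟩ : N) = a • (⟨m, hmN⟩ : N) := rfl
        have e2 : b ⊗ₜ[A] ((⟨m, hmN⟩ : N)) = b • ((1 : B) ⊗ₜ[A] (⟨m, hmN⟩ : N)) := by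
          rw [TensorProduct.smul_tmul', smul_eq_mul, mul_one]
        rw [e1, tmul_smul, e2, h1, smul_zero, smul_zero]
      | add u v hu hv => rw [hu, hv, add_zero]
    exact ⟨fun a b => by rw [hz a, hz b]⟩
  have : Subsingleton N := Module.FaithfullyFlat.lTensor_reflects_triviality A B N
  have h2 : (⟨m, hmN⟩ : N) = 0 := Subsingleton.elim _ _
  simpa using congrArg Subtype.val h2

lemma ff_algebraMap_injective {A B : Type*} [CommRing A] [CommRing B] [Algebra A B]
    [Module.FaithfullyFlat A B] : Function.Injective (algebraMap A B) := by
  rw [injective_iff_map_eq_zero]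
  intro a ha
  have h0 : (1 : B) ⊗ₜ[A] a = 0 := by
    rw [show a = a • (1 : A) by simp, ← smul_tmul, ← Algebra.algebraMap_eq_smul_one, ha,
      zero_tmul]
  exact ff_pure h0

lemma ff_span_contract {A B : Type*} [CommRing A] [CommRing B] [Algebra A B]
    [Module.FaithfullyFlat A B] {f a : A}
    (h : algebraMap A B a ∈ Ideal.span {algebraMap A B f}) : a ∈ Ideal.span {f} := by
  obtain ⟨c, hc⟩ := Ideal.mem_span_singleton'.mp h
  set I : Ideal A := Ideal.span {f} with hI
  have h0 : (1 : B) ⊗ₜ[A] (Submodule.Quotient.mk a : A ⧸ I) = 0 := by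
    have e1 : (Submodule.Quotient.mk a : A ⧸ I) = a • (Submodule.Quotient.mk 1 : A ⧸ I) := by
      rw [← Submodule.Quotient.mk_smul, smul_eq_mul, mul_one]
    rw [e1, ← smul_tmul, ← Algebra.algebraMap_eq_smul_one, ← hc, mul_comm,
      Algebra.smul_def (A := B) f c |>.symm, smul_tmul, ← Submodule.Quotient.mk_smul]
    have hz : (Submodule.Quotient.mk (f • (1:A)) : A ⧸ I) = 0 := by
      rw [Submodule.Quotient.mk_eq_zero]
      rw [smul_eq_mul, mul_one]
      exact Ideal.mem_span_singleton_self f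
    rw [hz, tmul_zero]
  have := ff_pure h0
  rwa [Submodule.Quotient.mk_eq_zero] at this

lemma ff_descent {A B : Type*} [CommRing A] [CommRing B] [Algebra A B]
    [Module.FaithfullyFlat A B] {b : B}
    (h : b ⊗ₜ[A] (1 : B) = (1 : B) ⊗ₜ[A] b) : ∃ a, algebraMap A B a = b := by
  set N := LinearMap.range (Algebra.linearMap A B) with hNdef
  have h0 : (1 : B) ⊗ₜ[A] (N.mkQ b) = 0 := by
    have hc := congrArg (LinearMap.lTensor B N.mkQ) h
    simp only [LinearMap.lTensor_tmul] at hc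
    have h1 : N.mkQ (1 : B) = 0 := by
      rw [Submodule.mkQ_apply, Submodule.Quotient.mk_eq_zero]
      exact ⟨1, by simp⟩
    rw [h1, tmul_zero] at hc
    exact hc.symm
  have := ff_pure h0
  rw [Submodule.mkQ_apply, Submodule.Quotient.mk_eq_zero] at this
  obtain ⟨a, ha⟩ := this
  exact ⟨a, ha⟩
theorem stmt1 {A B : Type*} [CommRing A] [CommRing B] [Algebra A B]
    [Module.FaithfullyFlat A B] (f : A) (hf : f ∈ nonZeroDivisors A)
    (ψ : Localization.Away f →+* Localization.Away (algebraMap A B f))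
    (hψ : ψ.comp (algebraMap A (Localization.Away f)) =
      (algebraMap B (Localization.Away (algebraMap A B f))).comp (algebraMap A B))
    (ψ₁ ψ₂ : Localization.Away (algebraMap A B f) →+*
      Localization.Away (algebraMap A (B ⊗[A] B) f))
    (hψ₁ : ψ₁.comp (algebraMap B (Localization.Away (algebraMap A B f))) =
      (algebraMap (B ⊗[A] B) (Localization.Away (algebraMap A (B ⊗[A] B) f))).comp
        (Algebra.TensorProduct.includeLeft (S := A) : B →ₐ[A] B ⊗[A] B).toRingHom)
    (hψ₂ : ψ₂.comp (algebraMap B (Localization.Away (algebraMap A B f))) =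
      (algebraMap (B ⊗[A] B) (Localization.Away (algebraMap A (B ⊗[A] B) f))).comp
        (Algebra.TensorProduct.includeRight : B →ₐ[A] B ⊗[A] B).toRingHom) :
    Set.InjOn ψ (MOset (algebraMap A (Localization.Away f)) f) ∧
      ∀ y ∈ MOset (algebraMap B (Localization.Away (algebraMap A B f))) (algebraMap A B f),
        (ψ₁ y = ψ₂ y ↔ ∃ x ∈ MOset (algebraMap A (Localization.Away f)) f, ψ x = y) := by
  have φinj : Function.Injective (algebraMap A B) := ff_algebraMap_injective
  -- flatness of B ⊗ B over A
  haveI hflatBB : Module.Flat A (B ⊗[A] B) := Module.Flat.trans A B (B ⊗[A] B)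
  -- nonzerodivisor facts
  have hfB : algebraMap A B f ∈ nonZeroDivisors B := by
    rw [mem_nonZeroDivisors_iff_right]
    intro z hz
    refine flat_smul_cancel (M := B) hf ?_
    rw [Algebra.smul_def, mul_comm]
    exact hz
  have hfBB : algebraMap A (B ⊗[A] B) f ∈ nonZeroDivisors (B ⊗[A] B) := by
    rw [mem_nonZeroDivisors_iff_right]
    intro z hz
    refine flat_smul_cancel (M := B ⊗[A] B) hf ?_
    rw [Algebra.smul_def, mul_comm]
    exact hz
  have powleA : Submonoid.powers f ≤ nonZeroDivisors A := by
    rintro x ⟨n, rfl⟩; exact pow_mem hf n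
  have powleB : Submonoid.powers (algebraMap A B f) ≤ nonZeroDivisors B := by
    rintro x ⟨n, rfl⟩; exact pow_mem hfB n
  have powleBB : Submonoid.powers (algebraMap A (B ⊗[A] B) f) ≤ nonZeroDivisors (B ⊗[A] B) := by
    rintro x ⟨n, rfl⟩; exact pow_mem hfBB n
  have ιAinj : Function.Injective (algebraMap A (Localization.Away f)) :=
    IsLocalization.injective _ powleA
  have ιBinj : Function.Injective (algebraMap B (Localization.Away (algebraMap A B f))) :=
    IsLocalization.injective _ powleB
  have ιCinj : Function.Injective
      (algebraMap (B ⊗[A] B) (Localization.Away (algebraMap A (B ⊗[A] B) f))) :=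
    IsLocalization.injective _ powleBB
  -- global injectivity of ψ
  have ψinj : Function.Injective ψ := by
    rw [injective_iff_map_eq_zero]
    intro x hx
    obtain ⟨⟨a, s⟩, hs⟩ := IsLocalization.surj (Submonoid.powers f) x
    have h2 : (algebraMap B (Localization.Away (algebraMap A B f))) (algebraMap A B a) = 0 := by
      have hc := congrArg ψ hs
      rw [map_mul, hx, zero_mul] at hc
      calc (algebraMap B (Localization.Away (algebraMap A B f))) (algebraMap A B a)
          = ψ (algebraMap A (Localization.Away f) a) := (RingHom.congr_fun hψ a).symm
        _ = 0 := hc.symm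
    have h3 : algebraMap A B a = 0 := by
      apply ιBinj; rw [h2, map_zero]
    have ha : a = 0 := by apply φinj; rw [h3, map_zero]
    rw [ha, map_zero] at hs
    have hu := IsLocalization.map_units (Localization.Away f) s
    exact (hu.mul_left_eq_zero).mp hs
  refine ⟨fun x _ x' _ h => ψinj h, fun y hy => ?_⟩
  constructor
  · -- hard direction
    intro h
    obtain ⟨b, hbrad, hb⟩ := hy
    -- apply ψ₁ and ψ₂ to hb
    have e1 : ∀ c : B, ψ₁ ((algebraMap B (Localization.Away (algebraMap A B f))) c) =
        (algebraMap (B ⊗[A] B) (Localization.Away (algebraMap A (B ⊗[A] B) f)))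
          (c ⊗ₜ[A] 1) := fun c => RingHom.congr_fun hψ₁ c
    have e2 : ∀ c : B, ψ₂ ((algebraMap B (Localization.Away (algebraMap A B f))) c) =
        (algebraMap (B ⊗[A] B) (Localization.Away (algebraMap A (B ⊗[A] B) f)))
          ((1:B) ⊗ₜ[A] c) := fun c => RingHom.congr_fun hψ₂ c
    have hb1 := congrArg ψ₁ hb
    have hb2 := congrArg ψ₂ hb
    rw [map_mul, e1, e1] at hb1
    rw [map_mul, e2, e2] at hb2
    have hff : (algebraMap A B f) ⊗ₜ[A] (1:B) = (1:B) ⊗ₜ[A] (algebraMap A B f) := by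
      rw [Algebra.algebraMap_eq_smul_one, smul_tmul]
    rw [h] at hb1
    rw [← hff] at hb2
    have hbb : b ⊗ₜ[A] (1:B) = (1:B) ⊗ₜ[A] b := ιCinj (by rw [hb1, hb2])
    obtain ⟨a, ha⟩ := ff_descent hbb
    obtain ⟨n, hn⟩ := hbrad
    have han : a ^ n ∈ Ideal.span {f} := by
      apply ff_span_contract (B := B)
      rw [map_pow, ha]
      exact hn
    have harad : a ∈ (Ideal.span {f}).radical := ⟨n, han⟩
    -- construct x
    have hu := IsLocalization.map_units (Localization.Away f)
      (⟨f, Submonoid.mem_powers f⟩ : Submonoid.powers f)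
    obtain ⟨v, hv⟩ := hu
    refine ⟨algebraMap A (Localization.Away f) a * ↑v⁻¹, ⟨a, harad, ?_⟩, ?_⟩
    · -- membership in MOset
      have : (algebraMap A (Localization.Away f)) f = (v : Localization.Away f) := hv.symm
      rw [this]
      rw [mul_comm ((v : Localization.Away f)) _, mul_assoc]
      simp
    · -- ψ x = y
      have hψa : ψ ((algebraMap A (Localization.Away f)) a) =
          (algebraMap B (Localization.Away (algebraMap A B f))) (algebraMap A B a) :=
        RingHom.congr_fun hψ a
      have hψf : ψ ((algebraMap A (Localization.Away f)) f) =
          (algebraMap B (Localization.Away (algebraMap A B f))) (algebraMap A B f) :=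
        RingHom.congr_fun hψ f
      have huB := IsLocalization.map_units (Localization.Away (algebraMap A B f))
        (⟨algebraMap A B f, Submonoid.mem_powers _⟩ : Submonoid.powers (algebraMap A B f))
      apply huB.mul_left_cancel
      have hx : (algebraMap A (Localization.Away f)) f *
          ((algebraMap A (Localization.Away f)) a * ↑v⁻¹) =
          (algebraMap A (Localization.Away f)) a := by
        rw [show (algebraMap A (Localization.Away f)) f = (v : Localization.Away f) from hv.symm,
          mul_comm ((v : Localization.Away f)) _, mul_assoc]
        simp
      calc (algebraMap B (Localization.Away (algebraMap A B f))) (algebraMap A B f) *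
            ψ ((algebraMap A (Localization.Away f)) a * ↑v⁻¹)
          = ψ ((algebraMap A (Localization.Away f)) f *
              ((algebraMap A (Localization.Away f)) a * ↑v⁻¹)) := by
            simp only [map_mul]
            rw [hψf]
        _ = ψ ((algebraMap A (Localization.Away f)) a) := by rw [hx]
        _ = (algebraMap B (Localization.Away (algebraMap A B f))) b := by rw [hψa, ha]
        _ = (algebraMap B (Localization.Away (algebraMap A B f))) (algebraMap A B f) * y := hb
  · -- easy direction
    rintro ⟨x, _, rfl⟩
    have hlr : ((Algebra.TensorProduct.includeLeft (S := A) : B →ₐ[A] B ⊗[A] B).toRingHom).comp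
        (algebraMap A B) =
        ((Algebra.TensorProduct.includeRight : B →ₐ[A] B ⊗[A] B).toRingHom).comp
        (algebraMap A B) := by
      ext a
      show (algebraMap A B a) ⊗ₜ[A] (1:B) = (1:B) ⊗ₜ[A] (algebraMap A B a)
      rw [Algebra.algebraMap_eq_smul_one, smul_tmul]
    have key : ψ₁.comp ψ = ψ₂.comp ψ := by
      apply IsLocalization.ringHom_ext (Submonoid.powers f)
      have c1 : (ψ₁.comp ψ).comp (algebraMap A (Localization.Away f)) =
          (algebraMap (B ⊗[A] B) (Localization.Away (algebraMap A (B ⊗[A] B) f))).comp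
            (((Algebra.TensorProduct.includeLeft (S := A) : B →ₐ[A] B ⊗[A] B).toRingHom).comp
              (algebraMap A B)) := by
        rw [RingHom.comp_assoc, hψ, ← RingHom.comp_assoc, hψ₁, RingHom.comp_assoc]
      have c2 : (ψ₂.comp ψ).comp (algebraMap A (Localization.Away f)) =
          (algebraMap (B ⊗[A] B) (Localization.Away (algebraMap A (B ⊗[A] B) f))).comp
            (((Algebra.TensorProduct.includeRight : B →ₐ[A] B ⊗[A] B).toRingHom).comp
              (algebraMap A B)) := by
        rw [RingHom.comp_assoc, hψ, ← RingHom.comp_assoc, hψ₂, RingHom.comp_assoc]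
      rw [c1, c2, hlr]
    exact RingHom.congr_fun key x
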